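/- Let G be a tree on n vertices, let e be a balanced edge of G, let C be a largest component of G \ e, and let c be the endpoint of e lying in C. If |V(C)| ≥ 2n/3, then c is a centroid of C. -/

import Mathlib

/-- The subgraph of `G` obtained by deleting the edge `uv`. -/
noncomputable def delEdge {V : Type*} (G : SimpleGraph V) (u v : V) : SimpleGraph V :=
  G.deleteEdges {s(u, v)}

/-- The weight (size of the larger of the two components) of the cut given by
the edge `uv` of a tree `G`. -/
noncomputable def cutWeight {V : Type*} (G : SimpleGraph V) (u v : V) : ℕ :=
  max ((delEdge G u v).connectedComponentMk u).supp.ncard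
      ((delEdge G u v).connectedComponentMk v).supp.ncard

open SimpleGraph

section Aux

variable {V : Type*}

/-- A tree edge is a bridge. -/
lemma tree_bridge (G : SimpleGraph V) (hG : G.IsTree) {a b : V} (hab : G.Adj a b) :
    ¬ (delEdge G a b).Reachable a b :=
  (isBridge_iff.mp ((isAcyclic_iff_forall_adj_isBridge.mp hG.2) hab))

/-- Walking in `G` while tracking reachability in `G` minus the edge `ab`. -/
lemma cover_aux (G : SimpleGraph V) (a b : V) {x z : V} (p : G.Walk x z) :
    (delEdge G a b).Reachable x z
      ∨ ((delEdge G a b).Reachable x a ∧ (delEdge G a b).Reachable b z)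
      ∨ ((delEdge G a b).Reachable x b ∧ (delEdge G a b).Reachable a z) := by
  induction p with
  | nil => exact Or.inl (Reachable.refl _)
  | @cons s t _ h p ih =>
    by_cases he : s(s, t) = s(a, b)
    · rw [Sym2.eq_iff] at he
      rcases he with ⟨rfl, rfl⟩ | ⟨rfl, rfl⟩
      · rcases ih with h' | ⟨h1, h2⟩ | ⟨h1, h2⟩
        · exact Or.inr (Or.inl ⟨Reachable.refl _, h'⟩)
        · exact Or.inl (h1.symm.trans h2)
        · exact Or.inl h2
      · rcases ih with h' | ⟨h1, h2⟩ | ⟨h1, h2⟩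
        · exact Or.inr (Or.inr ⟨Reachable.refl _, h'⟩)
        · exact Or.inl h2
        · exact Or.inl (h1.symm.trans h2)
    · have hadj : (delEdge G a b).Adj s t := by
        simp only [delEdge, deleteEdges_adj, Set.mem_singleton_iff]
        exact ⟨h, he⟩
      rcases ih with h' | ⟨h1, h2⟩ | ⟨h1, h2⟩
      · exact Or.inl (hadj.reachable.trans h')
      · exact Or.inr (Or.inl ⟨hadj.reachable.trans h1, h2⟩)
      · exact Or.inr (Or.inr ⟨hadj.reachable.trans h1, h2⟩)

lemma cover (G : SimpleGraph V) (hG : G.Connected) (a b x : V) :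
    (delEdge G a b).Reachable x a ∨ (delEdge G a b).Reachable x b := by
  obtain ⟨p⟩ := hG.preconnected x a
  rcases cover_aux G a b p with h' | ⟨h1, _⟩ | ⟨h1, _⟩
  · exact Or.inl h'
  · exact Or.inl h1
  · exact Or.inr h1

lemma parts [Fintype V] (G : SimpleGraph V) (hG : G.IsTree) {a b : V} (hab : G.Adj a b) :
    ((delEdge G a b).connectedComponentMk a).supp.ncard
      + ((delEdge G a b).connectedComponentMk b).supp.ncard = Fintype.card V := by
  have hd : Disjoint ((delEdge G a b).connectedComponentMk a).supp
      ((delEdge G a b).connectedComponentMk b).supp := by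
    rw [Set.disjoint_left]
    intro x hxa hxb
    rw [ConnectedComponent.mem_supp_iff] at hxa hxb
    exact tree_bridge G hG hab
      ((ConnectedComponent.eq.mp hxa).symm.trans (ConnectedComponent.eq.mp hxb))
  have hu : ((delEdge G a b).connectedComponentMk a).supp
      ∪ ((delEdge G a b).connectedComponentMk b).supp = Set.univ := by
    ext x
    simp only [Set.mem_union, Set.mem_univ, iff_true, ConnectedComponent.mem_supp_iff,
      ConnectedComponent.eq]
    exact cover G hG.1 a b x
  rw [← Set.ncard_union_eq hd (Set.toFinite _) (Set.toFinite _), hu, Set.ncard_univ,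
    Nat.card_eq_fintype_card]

/-- A walk in a subgraph of `G` whose support lies in `S` yields reachability
in the induced graph on `S`. -/
lemma reach_induce {H G : SimpleGraph V} (hle : H ≤ G) (S : Set V) :
    ∀ {a b : V} (p : H.Walk a b) (hp : ∀ x ∈ p.support, x ∈ S),
      (G.induce S).Reachable ⟨a, hp a p.start_mem_support⟩ ⟨b, hp b p.end_mem_support⟩
  | _, _, SimpleGraph.Walk.nil, _ => Reachable.refl _
  | a, b, SimpleGraph.Walk.cons (v := c) h p, hp => by
    have hc : c ∈ S := hp c (by simp)
    have hrest := reach_induce hle S p (fun x hx => hp x (by simp [hx]))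
    have hadj : (G.induce S).Adj ⟨a, hp a (SimpleGraph.Walk.start_mem_support _)⟩ ⟨c, hc⟩ :=
      hle h
    exact hadj.reachable.trans hrest

/-- A walk in the induced graph on `S` yields reachability in `G` minus any
edge having an endpoint `c` outside `S`. -/
lemma reach_del (G : SimpleGraph V) (S : Set V) (c d : V) (hc : c ∉ S)
    {x y : ↥S} (p : (G.induce S).Walk x y) : (delEdge G c d).Reachable x y := by
  induction p with
  | nil => exact Reachable.refl _
  | @cons s t _ h p ih =>
    refine (Adj.reachable ?_).trans ih
    have hadj : G.Adj ↑s ↑t := h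
    simp only [delEdge, deleteEdges_adj, Set.mem_singleton_iff]
    refine ⟨hadj, fun he => ?_⟩
    have : c ∈ s((s : V), (t : V)) := he ▸ Sym2.mem_mk_left c d
    rw [Sym2.mem_iff] at this
    rcases this with rfl | rfl
    · exact hc s.2
    · exact hc t.2

/-- Transferring a walk avoiding the vertex `c'` from one edge-deleted graph
to another. -/
lemma reach_trans (G : SimpleGraph V) (c d c' d' : V) {a b : V}
    (p : (delEdge G c d).Walk a b) (h : c' ∉ p.support) :
    (delEdge G c' d').Reachable a b := by
  induction p with
  | nil => exact Reachable.refl _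
  | @cons s t _ hst p ih =>
    simp only [Walk.support_cons, List.mem_cons, not_or] at h
    refine (Adj.reachable ?_).trans (ih h.2)
    have hadj : G.Adj s t := ((deleteEdges_adj).mp hst).1
    simp only [delEdge, deleteEdges_adj, Set.mem_singleton_iff]
    refine ⟨hadj, fun he => ?_⟩
    have : c' ∈ s(s, t) := he ▸ Sym2.mem_mk_left c' d'
    rw [Sym2.mem_iff] at this
    rcases this with rfl | rfl
    · exact h.1 rfl
    · exact h.2 (Walk.start_mem_support p)

end Aux

/-- Let `uv` be a balanced edge of a tree `G` on `n` vertices, let `C` be a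
largest component of `G \ uv` and `v` its endpoint lying in `C`.
If `|C| ≥ 2n/3` then `v` is a centroid of `C`. -/
theorem balanced_edge_endpoint_is_centroid {V : Type*} [Fintype V]
    (G : SimpleGraph V) (hG : G.IsTree)
    (u v : V) (huv : G.Adj u v)
    (hbal : ∀ a b : V, G.Adj a b → cutWeight G u v ≤ cutWeight G a b)
    (C : Set V) (hC : C = ((delEdge G u v).connectedComponentMk v).supp)
    (hlarge : ((delEdge G u v).connectedComponentMk u).supp.ncard ≤ C.ncard)
    (hbig : 2 * Fintype.card V ≤ 3 * C.ncard) :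
    ∀ K : (G.induce {x : V | x ∈ C ∧ x ≠ v}).ConnectedComponent,
      2 * K.supp.ncard ≤ C.ncard := by
  classical
  set S : Set V := {x : V | x ∈ C ∧ x ≠ v} with hS
  intro K
  obtain ⟨x, rfl⟩ := K.exists_rep
  have hxC : (x : V) ∈ C := x.2.1
  have hxv : (x : V) ≠ v := x.2.2
  have hvC : v ∈ C := by rw [hC]; exact ConnectedComponent.mem_supp_iff _ _ |>.mpr rfl
  have hmemC : ∀ y : V, y ∈ C ↔ (delEdge G u v).Reachable y v := by
    intro y
    rw [hC, ConnectedComponent.mem_supp_iff, ConnectedComponent.eq]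
  -- a path from v to x in delEdge G u v
  obtain ⟨q0⟩ := (hmemC x |>.mp hxC).symm
  obtain ⟨w, hadj, q, hq⟩ :=
    Walk.not_nil_iff.mp (Walk.not_nil_of_ne (fun h => hxv h.symm) (p := q0.toPath.1))
  have hpath : ((Walk.cons hadj q)).IsPath := hq ▸ q0.toPath.2
  have hvq : v ∉ q.support := ((Walk.cons_isPath_iff hadj q).mp hpath).2
  have hwv : w ≠ v := hadj.ne'
  have hwC : w ∈ C := (hmemC w).mpr hadj.symm.reachable
  have hwS : w ∈ S := ⟨hwC, hwv⟩
  have hqS : ∀ y ∈ q.support, y ∈ S := by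
    intro y hy
    have hyv : y ≠ v := fun h => hvq (h ▸ hy)
    have : (delEdge G u v).Reachable w y := ⟨q.takeUntil y hy⟩
    exact ⟨(hmemC y).mpr (this.symm.trans hadj.symm.reachable), hyv⟩
  have hwK : (G.induce S).connectedComponentMk ⟨w, hwS⟩ = (G.induce S).connectedComponentMk x :=
    ConnectedComponent.eq.mpr (reach_induce (deleteEdges_le _) S q hqS)
  have hGvw : G.Adj v w := ((deleteEdges_adj).mp hadj).1
  have hvS : v ∉ S := fun h => h.2 rfl
  -- the component of w in delEdge G v w is exactly (the image of) K
  have hsupp : ((delEdge G v w).connectedComponentMk w).supp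
      = Subtype.val '' ((G.induce S).connectedComponentMk x).supp := by
    ext y
    simp only [ConnectedComponent.mem_supp_iff, ConnectedComponent.eq, Set.mem_image]
    constructor
    · rintro ⟨r⟩
      have hvr : v ∉ r.support := by
        intro hv
        exact tree_bridge G hG hGvw ⟨r.dropUntil v hv⟩
      have hrS : ∀ z ∈ r.support, z ∈ S := by
        intro z hz
        have hzv : z ≠ v := fun h => hvr (h ▸ hz)
        have hswap : delEdge G v u = delEdge G u v := by
          unfold delEdge; rw [Sym2.eq_swap]
        have : (delEdge G u v).Reachable z w := by
          rw [← hswap]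
          refine reach_trans G v w v u (r.dropUntil z hz) ?_
          intro hv
          exact hvr (Walk.support_dropUntil_subset r hz hv)
        refine ⟨(hmemC z).mpr (this.trans ((hmemC w).mp hwC)), hzv⟩
      have hyS : y ∈ S := hrS y r.start_mem_support
      have : (G.induce S).Reachable ⟨y, hyS⟩ ⟨w, hwS⟩ :=
        reach_induce (deleteEdges_le _) S r hrS
      exact ⟨⟨y, hyS⟩, this.trans (ConnectedComponent.eq.mp hwK), rfl⟩
    · rintro ⟨z, hz, rfl⟩
      have : (G.induce S).Reachable z ⟨w, hwS⟩ := hz.trans (ConnectedComponent.eq.mp hwK.symm)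
      obtain ⟨r⟩ := this
      exact reach_del G S v w hvS r
  -- cardinalities
  have hk : ((delEdge G v w).connectedComponentMk w).supp.ncard
      = ((G.induce S).connectedComponentMk x).supp.ncard := by
    rw [hsupp, Set.ncard_image_of_injective _ Subtype.val_injective]
  set k := ((G.induce S).connectedComponentMk x).supp.ncard with hkdef
  have hparts_vw := parts G hG hGvw
  have hparts_uv := parts G hG huv
  rw [← hC] at hparts_uv
  have hklt : k < C.ncard := by
    have hss : Subtype.val '' ((G.induce S).connectedComponentMk x).supp ⊂ C := by
      constructor
      · rintro y ⟨z, _, rfl⟩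
        exact z.2.1
      · intro hsub
        have := hsub hvC
        obtain ⟨z, _, hz⟩ := this
        exact z.2.2 hz
    calc k = (Subtype.val '' ((G.induce S).connectedComponentMk x).supp).ncard := by
              rw [Set.ncard_image_of_injective _ Subtype.val_injective]
      _ < C.ncard := Set.ncard_lt_ncard hss C.toFinite
  have hcut_uv : cutWeight G u v = C.ncard := by
    rw [cutWeight, ← hC, max_eq_right hlarge]
  have hbal' := hbal v w hGvw
  rw [hcut_uv, cutWeight, hk] at hbal'
  rw [le_max_iff] at hbal'
  show 2 * ((G.induce S).connectedComponentMk x).supp.ncard ≤ C.ncard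
  rcases hbal' with h | h
  · omega
  · omega
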